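/- Let n >= 1 and let i satisfy 0 <= i <= floor(n/2). In F_2[X]/(Q_n(X)), the element Q_{n-1-i}(x) + Q_i(x) is divisible by c_n, where c_n = Q_{(n-1)/2}(x) if n is odd and c_n = Q_{n/2}(x) + Q_{n/2 - 1}(x) if n is even. Consequently, every doubly symmetric configuration in F_2[X]/(Q_n) tensor F_2[Y]/(Q_m) is divisible by the central configuration c_n * d_m. -/

import Mathlib

open TensorProduct Polynomial

private lemma chain15 (Q : ℕ → Polynomial (ZMod 2))
    (hrec : ∀ i, Q (i + 2) = X * Q (i + 1) + Q i)
    (C : Polynomial (ZMod 2)) (p q : ℕ)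
    (h0 : C ∣ Q p + Q q) (h1 : 1 ≤ q → C ∣ Q (p + 1) + Q (q - 1)) :
    ∀ j, j ≤ q → C ∣ Q (p + j) + Q (q - j) := by
  intro j
  induction j using Nat.strong_induction_on with
  | _ j ih =>
    match j with
    | 0 => intro _; simpa using h0
    | 1 => intro h; exact h1 h
    | (j+2) =>
      intro hj
      have two0 : (2 : Polynomial (ZMod 2)) = 0 := CharTwo.two_eq_zero
      have r1 : Q (p + (j+2)) = X * Q (p + (j+1)) + Q (p + j) := by
        have h := hrec (p + j)
        rw [show p + j + 2 = p + (j+2) by omega, show p + j + 1 = p + (j+1) by omega] at h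
        exact h
      have r2 : Q (q - j) = X * Q (q - (j+1)) + Q (q - (j+2)) := by
        have h := hrec (q - (j+2))
        rw [show q - (j+2) + 2 = q - j by omega, show q - (j+2) + 1 = q - (j+1) by omega] at h
        exact h
      have key : Q (p + (j+2)) + Q (q - (j+2))
          = X * (Q (p + (j+1)) + Q (q - (j+1))) + (Q (p + j) + Q (q - j)) := by
        linear_combination r1 - r2 - (X * Q (q - (j+1))) * two0
      rw [key]
      exact dvd_add ((ih (j+1) (by omega) (by omega)).mul_left X) (ih j (by omega) (by omega))

private lemma poly_div15 (Q : ℕ → Polynomial (ZMod 2))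
    (hrec : ∀ i, Q (i + 2) = X * Q (i + 1) + Q i)
    (n : ℕ) (hn : 1 ≤ n) :
    ∀ i, i ≤ n / 2 →
      (if Odd n then Q ((n - 1) / 2) else Q (n / 2) + Q (n / 2 - 1)) ∣ Q (n - 1 - i) + Q i := by
  intro i hi
  have two0 : (2 : Polynomial (ZMod 2)) = 0 := CharTwo.two_eq_zero
  by_cases hodd : Odd n
  · rw [if_pos hodd]
    obtain ⟨k, hk⟩ := hodd
    rw [show (n-1)/2 = k by omega]
    have hn2 : n / 2 = k := by omega
    have h0 : Q k ∣ Q k + Q k := by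
      rw [CharTwo.add_self_eq_zero (R := Polynomial (ZMod 2))]; exact dvd_zero _
    have h1 : 1 ≤ k → Q k ∣ Q (k+1) + Q (k-1) := by
      intro hk1
      have h := hrec (k-1)
      rw [show k-1+2 = k+1 by omega, show k-1+1 = k by omega] at h
      refine ⟨X, ?_⟩
      linear_combination h + Q (k-1) * two0
    have hc := chain15 Q hrec (Q k) k k h0 h1 (k - i) (by omega)
    rw [show k + (k-i) = n-1-i by omega, show k - (k-i) = i by omega] at hc
    exact hc
  · rw [if_neg hodd]
    have hk : n = 2 * (n/2) := by
      rcases Nat.even_or_odd n with h | h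
      · obtain ⟨r, hr⟩ := h; omega
      · exact absurd h hodd
    set k := n / 2 with hkdef
    have hk1 : 1 ≤ k := by omega
    rcases eq_or_lt_of_le hi with he | hlt
    · rw [show n - 1 - i = k - 1 by omega, show i = k by omega]
      exact ⟨1, by ring⟩
    · have h0 : Q k + Q (k-1) ∣ Q k + Q (k-1) := dvd_refl _
      have h1 : 1 ≤ k - 1 → Q k + Q (k-1) ∣ Q (k+1) + Q (k-1-1) := by
        intro hk2
        have e1 := hrec (k-1)
        rw [show k-1+2 = k+1 by omega, show k-1+1 = k by omega] at e1
        have e2 := hrec (k-2)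
        rw [show k-2+2 = k by omega, show k-2+1 = k-1 by omega] at e2
        rw [show k-1-1 = k-2 by omega]
        refine ⟨X + 1, ?_⟩
        linear_combination e1 - e2 - (X * Q (k-1)) * two0
      have hc := chain15 Q hrec (Q k + Q (k-1)) k (k-1) h0 h1 (k-1-i) (by omega)
      rw [show k + (k-1-i) = n-1-i by omega, show k-1-(k-1-i) = i by omega] at hc
      exact hc

private lemma half_sum15 {M : Type*} [AddCommMonoid M] {n : ℕ} (f : Fin n → M) :
    ∑ i, f i
      = (∑ i ∈ Finset.univ.filter (fun i : Fin n => 2 * (i : ℕ) + 1 < n), (f i + f i.rev))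
        + ∑ i ∈ Finset.univ.filter (fun i : Fin n => 2 * (i : ℕ) + 1 = n), f i := by
  classical
  have s1 := Finset.sum_filter_add_sum_filter_not Finset.univ
    (fun i : Fin n => 2 * (i : ℕ) + 1 < n) f
  have s2 := Finset.sum_filter_add_sum_filter_not
    (Finset.univ.filter (fun i : Fin n => ¬ (2 * (i : ℕ) + 1 < n)))
    (fun i : Fin n => 2 * (i : ℕ) + 1 = n) f
  have e1 : (Finset.univ.filter (fun i : Fin n => ¬ (2 * (i : ℕ) + 1 < n))).filter
      (fun i : Fin n => 2 * (i : ℕ) + 1 = n)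
      = Finset.univ.filter (fun i : Fin n => 2 * (i : ℕ) + 1 = n) := by
    ext x; simp; omega
  have e2 : ∑ i ∈ (Finset.univ.filter (fun i : Fin n => ¬ (2 * (i : ℕ) + 1 < n))).filter
      (fun i : Fin n => ¬ (2 * (i : ℕ) + 1 = n)), f i
      = ∑ i ∈ Finset.univ.filter (fun i : Fin n => 2 * (i : ℕ) + 1 < n), f i.rev := by
    refine Finset.sum_nbij' (fun a => Fin.rev a) (fun a => Fin.rev a) ?_ ?_ ?_ ?_ ?_
    · intro a ha
      simp only [Finset.mem_filter, Finset.mem_univ, true_and] at ha ⊢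
      have := a.isLt
      simp [Fin.val_rev]; omega
    · intro a ha
      simp only [Finset.mem_filter, Finset.mem_univ, true_and] at ha ⊢
      have := a.isLt
      simp [Fin.val_rev]; omega
    · intro a _; exact Fin.rev_rev a
    · intro a _; exact Fin.rev_rev a
    · intro a _; rw [Fin.rev_rev]
  rw [Finset.sum_add_distrib]
  rw [← s1, ← s2, e1, e2]
  abel

set_option maxHeartbeats 1000000 in
set_option synthInstance.maxHeartbeats 1000000 in
/-- In `F_2[X]/(Q_n)`, the elements `Q_{n-1-i}(x) + Q_i(x)` (for `0 ≤ i ≤ ⌊n/2⌋`) are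
divisible by the central element `c_n`; consequently every doubly symmetric configuration
in `F_2[X]/(Q_n) ⊗ F_2[Y]/(Q_m)` is divisible by the central configuration `c_n ⊗ d_m`. -/
theorem stmt_15 (Q : ℕ → Polynomial (ZMod 2)) (h0 : Q 0 = 1) (h1 : Q 1 = Polynomial.X)
    (hrec : ∀ i, Q (i + 2) = Polynomial.X * Q (i + 1) + Q i)
    (n m : ℕ) (hn : 1 ≤ n) (hm : 1 ≤ m) :
    let A := Polynomial (ZMod 2) ⧸ Ideal.span {Q n}
    let B := Polynomial (ZMod 2) ⧸ Ideal.span {Q m}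
    let mkA : Polynomial (ZMod 2) → A := Ideal.Quotient.mk _
    let mkB : Polynomial (ZMod 2) → B := Ideal.Quotient.mk _
    let c : A := if Odd n then mkA (Q ((n - 1) / 2))
      else mkA (Q (n / 2)) + mkA (Q (n / 2 - 1))
    let d : B := if Odd m then mkB (Q ((m - 1) / 2))
      else mkB (Q (m / 2)) + mkB (Q (m / 2 - 1))
    (∀ i : ℕ, i ≤ n / 2 → c ∣ mkA (Q (n - 1 - i)) + mkA (Q i)) ∧
    (∀ a : Fin n → Fin m → ZMod 2,
      (∀ i j, a i j = a i.rev j ∧ a i j = a i j.rev) →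
      (c ⊗ₜ d : A ⊗[ZMod 2] B) ∣
        ∑ i : Fin n, ∑ j : Fin m, a i j • ((mkA (Q (i : ℕ))) ⊗ₜ (mkB (Q (j : ℕ))))) := by
  intro A B mkA mkB c d
  have hmkA : mkA = ⇑(Ideal.Quotient.mk (Ideal.span {Q n})) := rfl
  have hmkB : mkB = ⇑(Ideal.Quotient.mk (Ideal.span {Q m})) := rfl
  -- part 1 (for A, and its analogue for B)
  have part1 : ∀ i : ℕ, i ≤ n / 2 → c ∣ mkA (Q (n - 1 - i)) + mkA (Q i) := by
    intro i hi
    have h := poly_div15 Q hrec n hn i hi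
    have h2 := map_dvd (Ideal.Quotient.mk (Ideal.span {Q n})) h
    rw [map_add] at h2
    by_cases hodd : Odd n
    · have hceq : c = mkA (Q ((n - 1) / 2)) := if_pos hodd
      rw [hceq, hmkA]
      rw [if_pos hodd] at h2
      exact h2
    · have hceq : c = mkA (Q (n / 2)) + mkA (Q (n / 2 - 1)) := if_neg hodd
      rw [hceq, hmkA]
      rw [if_neg hodd, map_add] at h2
      exact h2
  have part1B : ∀ j : ℕ, j ≤ m / 2 → d ∣ mkB (Q (m - 1 - j)) + mkB (Q j) := by
    intro j hj
    have h := poly_div15 Q hrec m hm j hj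
    have h2 := map_dvd (Ideal.Quotient.mk (Ideal.span {Q m})) h
    rw [map_add] at h2
    by_cases hodd : Odd m
    · have hceq : d = mkB (Q ((m - 1) / 2)) := if_pos hodd
      rw [hceq, hmkB]
      rw [if_pos hodd] at h2
      exact h2
    · have hceq : d = mkB (Q (m / 2)) + mkB (Q (m / 2 - 1)) := if_neg hodd
      rw [hceq, hmkB]
      rw [if_neg hodd, map_add] at h2
      exact h2
  refine ⟨part1, ?_⟩
  intro a ha
  -- divisibility of the symmetric pairs, for every index
  have hA : ∀ i : Fin n, c ∣ mkA (Q (i : ℕ)) + mkA (Q ((i.rev : Fin n) : ℕ)) := by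
    intro i
    have hlt := i.isLt
    have hrv : ((i.rev : Fin n) : ℕ) = n - 1 - (i : ℕ) := by
      rw [Fin.val_rev]; omega
    rcases le_or_gt (i : ℕ) (n / 2) with h | h
    · have := part1 (i : ℕ) h
      rw [hrv, add_comm]
      exact this
    · have h2 : n - 1 - (i : ℕ) ≤ n / 2 := by omega
      have := part1 (n - 1 - (i : ℕ)) h2
      rw [show n - 1 - (n - 1 - (i : ℕ)) = (i : ℕ) by omega] at this
      rw [hrv]
      exact this
  have hB : ∀ j : Fin m, d ∣ mkB (Q (j : ℕ)) + mkB (Q ((j.rev : Fin m) : ℕ)) := by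
    intro j
    have hlt := j.isLt
    have hrv : ((j.rev : Fin m) : ℕ) = m - 1 - (j : ℕ) := by
      rw [Fin.val_rev]; omega
    rcases le_or_gt (j : ℕ) (m / 2) with h | h
    · have := part1B (j : ℕ) h
      rw [hrv, add_comm]
      exact this
    · have h2 : m - 1 - (j : ℕ) ≤ m / 2 := by omega
      have := part1B (m - 1 - (j : ℕ)) h2
      rw [show m - 1 - (m - 1 - (j : ℕ)) = (j : ℕ) by omega] at this
      rw [hrv]
      exact this
  -- central indices
  have hcenterA : ∀ i : Fin n, 2 * (i : ℕ) + 1 = n → mkA (Q (i : ℕ)) = c := by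
    intro i hi2
    have hodd : Odd n := ⟨(i : ℕ), by omega⟩
    have hceq : c = mkA (Q ((n - 1) / 2)) := if_pos hodd
    rw [hceq, show (n - 1) / 2 = (i : ℕ) by omega]
  have hcenterB : ∀ j : Fin m, 2 * (j : ℕ) + 1 = m → mkB (Q (j : ℕ)) = d := by
    intro j hj2
    have hodd : Odd m := ⟨(j : ℕ), by omega⟩
    have hceq : d = mkB (Q ((m - 1) / 2)) := if_pos hodd
    rw [hceq, show (m - 1) / 2 = (j : ℕ) by omega]
  letI D : Distrib (A ⊗[ZMod 2] B) := inferInstance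
  have dvdadd : ∀ x y z : A ⊗[ZMod 2] B, x ∣ y → x ∣ z → x ∣ y + z := fun x y z h1 h2 =>
    @dvd_add _ _ _ (@Distrib.leftDistribClass _ D) x y z h1 h2
  -- helper divisibility facts in the tensor product
  have dvd_tmul : ∀ (P : A) (R : B), c ∣ P → d ∣ R →
      (c ⊗ₜ[ZMod 2] d : A ⊗[ZMod 2] B) ∣ (P ⊗ₜ R) := by
    rintro P R ⟨p, rfl⟩ ⟨r, rfl⟩
    exact ⟨p ⊗ₜ r, (Algebra.TensorProduct.tmul_mul_tmul c p d r).symm⟩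
  have smul_dvd : ∀ (z : ZMod 2) (t x : A ⊗[ZMod 2] B), t ∣ x → t ∣ z • x := by
    intro z t x h
    have hz : z = 0 ∨ z = 1 := by revert z; decide
    rcases hz with rfl | rfl
    · rw [zero_smul]
      exact dvd_zero t
    · rw [one_smul]
      exact h
  -- inner sums (over a row)
  have inner : ∀ (g : Fin m → ZMod 2), (∀ j : Fin m, g j = g j.rev) → ∀ (P : A), c ∣ P →
      (c ⊗ₜ[ZMod 2] d : A ⊗[ZMod 2] B) ∣ ∑ j : Fin m, g j • (P ⊗ₜ mkB (Q (j : ℕ))) := by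
    intro g hg P hP
    rw [half_sum15 (fun j : Fin m => g j • (P ⊗ₜ[ZMod 2] mkB (Q (j : ℕ))))]
    refine dvdadd _ _ _ (Finset.dvd_sum (R := A ⊗[ZMod 2] B) ?_) (Finset.dvd_sum (R := A ⊗[ZMod 2] B) ?_)
    · intro j _
      have e : g j • (P ⊗ₜ[ZMod 2] mkB (Q (j : ℕ)))
            + g j.rev • (P ⊗ₜ[ZMod 2] mkB (Q ((j.rev : Fin m) : ℕ)))
          = g j • (P ⊗ₜ[ZMod 2] (mkB (Q (j : ℕ)) + mkB (Q ((j.rev : Fin m) : ℕ)))) := by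
        rw [← hg j, tmul_add, smul_add]
      rw [e]
      exact smul_dvd _ _ _ (dvd_tmul P _ hP (hB j))
    · intro j hj
      simp only [Finset.mem_filter, Finset.mem_univ, true_and] at hj
      rw [hcenterB j hj]
      exact smul_dvd _ _ _ (dvd_tmul P d hP dvd_rfl)
  -- outer sum
  rw [half_sum15 (fun i : Fin n => ∑ j : Fin m, a i j • (mkA (Q (i : ℕ)) ⊗ₜ[ZMod 2] mkB (Q (j : ℕ))))]
  refine dvdadd _ _ _ (Finset.dvd_sum (R := A ⊗[ZMod 2] B) ?_) (Finset.dvd_sum (R := A ⊗[ZMod 2] B) ?_)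
  · intro i _
    rw [← Finset.sum_add_distrib]
    have e : ∀ j : Fin m,
        a i j • (mkA (Q (i : ℕ)) ⊗ₜ[ZMod 2] mkB (Q (j : ℕ)))
          + a i.rev j • (mkA (Q ((i.rev : Fin n) : ℕ)) ⊗ₜ[ZMod 2] mkB (Q (j : ℕ)))
        = a i j • ((mkA (Q (i : ℕ)) + mkA (Q ((i.rev : Fin n) : ℕ))) ⊗ₜ[ZMod 2] mkB (Q (j : ℕ))) := by
      intro j
      rw [← (ha i j).1, add_tmul, smul_add]
    rw [Finset.sum_congr rfl (fun j _ => e j)]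
    exact inner (fun j => a i j) (fun j => (ha i j).2) _ (hA i)
  · intro i hi
    simp only [Finset.mem_filter, Finset.mem_univ, true_and] at hi
    simp only [hcenterA i hi]
    exact inner (fun j => a i j) (fun j => (ha i j).2) c dvd_rfl
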